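/- arXiv:2412.12655 — 5 statements merged into one kernel-verified Lean document; each statement's English description precedes it below -/
import Mathlib

section
/- Let r_n := (2/π) ∫_0^{π/2} sin(nx)² / (sin x · √(4 − cos(x)²)) dx. Then r_0 = 0, r_1 = 1/3, and for every integer n ≥ 2 one has r_n = ((15n−22)/(n−1))·r_{n−1} − ((15n−23)/(n−1))·r_{n−2} + ((n−2)/(n−1))·r_{n−3} − 4√3/(π(n−1)), where for n = 2 the term r_{n−3} has coefficient (n−2)/(n−1) = 0 (convention r_{−1} := 0). -/
open Real intervalIntegral
open MeasureTheory

/-- The two-point resistance `R(n,n)` of the infinite triangular resistor lattice,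
extended by `0` for negative indices. -/
noncomputable def triRes (n : ℤ) : ℝ :=
  if 0 ≤ n then
    (2 / π) * ∫ x in (0:ℝ)..(π / 2),
      Real.sin (n * x) ^ 2 / (Real.sin x * Real.sqrt (4 - Real.cos x ^ 2))
  else 0

lemma sinsq (a b : ℝ) : Real.sin a ^ 2 - Real.sin b ^ 2 = Real.sin (a + b) * Real.sin (a - b) := by
  rw [Real.sin_add, Real.sin_sub]
  linear_combination (Real.sin b ^ 2) * (Real.sin_sq_add_cos_sq a)
    - (Real.sin a ^ 2) * (Real.sin_sq_add_cos_sq b)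

lemma sin_nat_bound (k : ℕ) (x : ℝ) : |Real.sin (k * x)| ≤ k * |Real.sin x| := by
  induction k with
  | zero => simp
  | succ j ih =>
    have h : ((j:ℝ) + 1) * x = (j:ℝ) * x + x := by ring
    push_cast
    rw [h, Real.sin_add]
    calc |Real.sin ((j:ℝ)*x) * Real.cos x + Real.cos ((j:ℝ)*x) * Real.sin x|
        ≤ |Real.sin ((j:ℝ)*x) * Real.cos x| + |Real.cos ((j:ℝ)*x) * Real.sin x| := abs_add_le _ _
      _ ≤ |Real.sin ((j:ℝ)*x)| * 1 + 1 * |Real.sin x| := by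
          rw [abs_mul, abs_mul]
          gcongr <;> [exact Real.abs_cos_le_one x; exact Real.abs_cos_le_one _]
      _ ≤ (j:ℝ) * |Real.sin x| + 1 * |Real.sin x| := by
          nlinarith [abs_nonneg (Real.sin x)]
      _ = ((j:ℝ)+1) * |Real.sin x| := by ring

lemma sin_int_bound (k : ℤ) (x : ℝ) : |Real.sin (k * x)| ≤ |(k:ℝ)| * |Real.sin x| := by
  rcases le_or_gt 0 k with h | h
  · lift k to ℕ using h
    push_cast
    simpa [abs_of_nonneg (by positivity : (0:ℝ) ≤ (k:ℕ))] using sin_nat_bound k x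
  · have hk : (k:ℝ) * x = -((-(k:ℝ)) * x) := by ring
    rw [hk, Real.sin_neg, abs_neg]
    have h1 : (((-k).toNat : ℕ) : ℝ) = -(k:ℝ) := by
      have : ((-k).toNat : ℤ) = -k := Int.toNat_of_nonneg (by omega)
      exact_mod_cast congrArg (fun z : ℤ => (z : ℝ)) this
    have := sin_nat_bound (-k).toNat x
    rw [h1] at this
    have habs : |(k:ℝ)| = -(k:ℝ) := abs_of_neg (by exact_mod_cast h)
    rw [habs]; exact this

lemma integrand_integrable (k : ℤ) :
    IntervalIntegrable (fun x => Real.sin (k*x)^2/(Real.sin x * Real.sqrt (4 - Real.cos x^2)))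
      volume 0 (π/2) := by
  apply IntervalIntegrable.mono_fun (_root_.intervalIntegrable_const (c := (k:ℝ)^2))
  · apply Measurable.aestronglyMeasurable
    exact ((Real.measurable_sin.comp (measurable_id.const_mul _)).pow_const 2).div
      (Real.measurable_sin.mul ((measurable_const.sub (Real.measurable_cos.pow_const 2)).sqrt))
  · filter_upwards with x
    rw [Real.norm_eq_abs, Real.norm_eq_abs]
    have hc : Real.cos x ^ 2 ≤ 1 := Real.cos_sq_le_one x
    have hu1 : (1:ℝ) ≤ Real.sqrt (4 - Real.cos x ^2) := by
      rw [show (1:ℝ) = Real.sqrt 1 by simp]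
      exact Real.sqrt_le_sqrt (by nlinarith)
    have hs1 : |Real.sin x| ≤ 1 := Real.abs_sin_le_one x
    rcases eq_or_ne (Real.sin x) 0 with h | h
    · simp [h]; positivity
    · have hb := sin_int_bound k x
      have hspos : 0 < |Real.sin x| := abs_pos.mpr h
      have h1 : 0 < |Real.sin x| * Real.sqrt (4 - Real.cos x ^2) := by positivity
      rw [abs_div, abs_mul, abs_of_nonneg (Real.sqrt_nonneg _),
        abs_of_nonneg (sq_nonneg (Real.sin (k*x))), div_le_iff₀ h1]
      have h2 : Real.sin (k*x)^2 ≤ (k:ℝ)^2 * Real.sin x^2 := by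
        nlinarith [sq_abs (Real.sin (k*x)), sq_abs ((k:ℝ)), sq_abs (Real.sin x),
          abs_nonneg (Real.sin (k*x)), abs_nonneg ((k:ℝ)*Real.sin x)]
      have h3 : Real.sin x ^2 = |Real.sin x|^2 := (sq_abs _).symm
      have hk2 : |(k:ℝ)^2| = (k:ℝ)^2 := abs_of_nonneg (sq_nonneg _)
      rw [hk2]
      nlinarith [sq_nonneg ((k:ℝ)),
        mul_le_mul_of_nonneg_left (hs1.trans hu1) (abs_nonneg (Real.sin x))]

lemma pointwise_eq (ν x : ℝ) (hs : Real.sin x ≠ 0) :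
    (ν-1) * (Real.sin (ν*x)^2/(Real.sin x * Real.sqrt (4 - Real.cos x^2)))
      - (15*ν-22) * (Real.sin ((ν-1)*x)^2/(Real.sin x * Real.sqrt (4 - Real.cos x^2)))
      + (15*ν-23) * (Real.sin ((ν-2)*x)^2/(Real.sin x * Real.sqrt (4 - Real.cos x^2)))
      - (ν-2) * (Real.sin ((ν-3)*x)^2/(Real.sin x * Real.sqrt (4 - Real.cos x^2)))
    = -2*(2*ν-3) * Real.sin ((2*ν-3)*x) * Real.sqrt (4 - Real.cos x^2)
      + 2 * Real.cos ((2*ν-3)*x) * Real.sin x * Real.cos x / Real.sqrt (4 - Real.cos x^2) := by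
  have hc2 : Real.cos x ^ 2 ≤ 1 := Real.cos_sq_le_one x
  have hupos : 0 < Real.sqrt (4 - Real.cos x^2) := Real.sqrt_pos.mpr (by nlinarith)
  have hu : Real.sqrt (4 - Real.cos x^2) ≠ 0 := hupos.ne'
  have hu2 : Real.sqrt (4 - Real.cos x^2) ^ 2 = 4 - Real.cos x^2 := Real.sq_sqrt (by nlinarith)
  have h1 : Real.sin (ν*x)^2 - Real.sin ((ν-1)*x)^2 = Real.sin ((2*ν-1)*x) * Real.sin x := by
    have h := sinsq (ν*x) ((ν-1)*x)
    rw [show ν*x + (ν-1)*x = (2*ν-1)*x by ring, show ν*x - (ν-1)*x = x by ring] at h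
    exact h
  have h2 : Real.sin ((ν-1)*x)^2 - Real.sin ((ν-2)*x)^2 = Real.sin ((2*ν-3)*x) * Real.sin x := by
    have h := sinsq ((ν-1)*x) ((ν-2)*x)
    rw [show (ν-1)*x + (ν-2)*x = (2*ν-3)*x by ring, show (ν-1)*x - (ν-2)*x = x by ring] at h
    exact h
  have h3 : Real.sin ((ν-2)*x)^2 - Real.sin ((ν-3)*x)^2 = Real.sin ((2*ν-5)*x) * Real.sin x := by
    have h := sinsq ((ν-2)*x) ((ν-3)*x)
    rw [show (ν-2)*x + (ν-3)*x = (2*ν-5)*x by ring, show (ν-2)*x - (ν-3)*x = x by ring] at h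
    exact h
  have h4 : Real.sin ((2*ν-1)*x)
      = Real.sin ((2*ν-3)*x) * Real.cos (2*x) + Real.cos ((2*ν-3)*x) * Real.sin (2*x) := by
    rw [show (2*ν-1)*x = (2*ν-3)*x + 2*x by ring, Real.sin_add]
  have h5 : Real.sin ((2*ν-5)*x)
      = Real.sin ((2*ν-3)*x) * Real.cos (2*x) - Real.cos ((2*ν-3)*x) * Real.sin (2*x) := by
    rw [show (2*ν-5)*x = (2*ν-3)*x - 2*x by ring, Real.sin_sub]
  have h6 : Real.cos (2*x) = 2*Real.cos x^2 - 1 := Real.cos_two_mul x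
  have h7 : Real.sin (2*x) = 2*Real.sin x*Real.cos x := Real.sin_two_mul x
  have hsinv : Real.sin x * (Real.sin x)⁻¹ = 1 := mul_inv_cancel₀ hs
  have huinv : Real.sqrt (4 - Real.cos x^2) * (Real.sqrt (4 - Real.cos x^2))⁻¹ = 1 :=
    mul_inv_cancel₀ hu
  linear_combination (-(4*ν-6)*Real.sin ((2*ν-3)*x)*Real.sqrt (4 - Real.cos x^2)) * huinv
    + (((ν-1)*Real.sin ((2*ν-1)*x) - (14*ν-21)*Real.sin ((2*ν-3)*x)
      + (ν-2)*Real.sin ((2*ν-5)*x))/Real.sqrt (4 - Real.cos x^2)) * hsinv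
    + ((ν-1)/(Real.sin x*Real.sqrt (4 - Real.cos x^2))) * h1
    - ((14*ν-21)/(Real.sin x*Real.sqrt (4 - Real.cos x^2))) * h2
    + ((ν-2)/(Real.sin x*Real.sqrt (4 - Real.cos x^2))) * h3
    + ((ν-1)/Real.sqrt (4 - Real.cos x^2)) * h4
    + ((ν-2)/Real.sqrt (4 - Real.cos x^2)) * h5
    + ((2*ν-3)*Real.sin ((2*ν-3)*x)/Real.sqrt (4 - Real.cos x^2)) * h6
    + (Real.cos ((2*ν-3)*x)/Real.sqrt (4 - Real.cos x^2)) * h7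
    + (2*(2*ν-3)*Real.sin ((2*ν-3)*x)/Real.sqrt (4 - Real.cos x^2)) * hu2

lemma hasDeriv_F (ν x : ℝ) :
    HasDerivAt (fun y => 2 * Real.cos ((2*ν-3)*y) * Real.sqrt (4 - Real.cos y^2))
      (-2*(2*ν-3) * Real.sin ((2*ν-3)*x) * Real.sqrt (4 - Real.cos x^2)
        + 2 * Real.cos ((2*ν-3)*x) * Real.sin x * Real.cos x / Real.sqrt (4 - Real.cos x^2)) x := by
  have hc2 : Real.cos x ^ 2 ≤ 1 := Real.cos_sq_le_one x
  have hpos : (0:ℝ) < 4 - Real.cos x^2 := by nlinarith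
  have hupos : 0 < Real.sqrt (4 - Real.cos x^2) := Real.sqrt_pos.mpr hpos
  have hu2 : Real.sqrt (4 - Real.cos x^2) ^ 2 = 4 - Real.cos x^2 := Real.sq_sqrt hpos.le
  have h1 : HasDerivAt (fun y : ℝ => (2*ν-3)*y) (2*ν-3) x := by
    simpa using (hasDerivAt_id x).const_mul (2*ν-3)
  have h2 : HasDerivAt (fun y => Real.cos ((2*ν-3)*y))
      (-Real.sin ((2*ν-3)*x) * (2*ν-3)) x := (Real.hasDerivAt_cos _).comp x h1
  have h3 : HasDerivAt (fun y : ℝ => 4 - Real.cos y^2)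
      (-(2 * Real.cos x ^ 1 * -Real.sin x)) x :=
    (((Real.hasDerivAt_cos x).pow 2)).const_sub 4
  have h4 : HasDerivAt (fun y => Real.sqrt (4 - Real.cos y^2))
      (1/(2*Real.sqrt (4 - Real.cos x^2)) * -(2 * Real.cos x ^ 1 * -Real.sin x)) x :=
    (Real.hasDerivAt_sqrt hpos.ne').comp x h3
  have h5 := (h2.const_mul 2).mul h4
  refine h5.congr_deriv ?_
  field_simp

lemma sqrt_cont : Continuous (fun x : ℝ => Real.sqrt (4 - Real.cos x^2)) :=
  Real.continuous_sqrt.comp (by continuity)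

lemma sqrt_ne (x : ℝ) : Real.sqrt (4 - Real.cos x^2) ≠ 0 :=
  (Real.sqrt_pos.mpr (by nlinarith [Real.cos_sq_le_one x])).ne'

lemma G_cont (ν : ℝ) : Continuous (fun x =>
    -2*(2*ν-3) * Real.sin ((2*ν-3)*x) * Real.sqrt (4 - Real.cos x^2)
      + 2 * Real.cos ((2*ν-3)*x) * Real.sin x * Real.cos x / Real.sqrt (4 - Real.cos x^2)) := by
  apply Continuous.add
  · exact (continuous_const.mul (Real.continuous_sin.comp (continuous_const.mul continuous_id))).mul
      sqrt_cont
  · exact Continuous.div (by continuity) sqrt_cont sqrt_ne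

lemma int_G (n : ℤ) :
    (∫ x in (0:ℝ)..(π/2),
      (-2*(2*(n:ℝ)-3) * Real.sin ((2*(n:ℝ)-3)*x) * Real.sqrt (4 - Real.cos x^2)
        + 2 * Real.cos ((2*(n:ℝ)-3)*x) * Real.sin x * Real.cos x / Real.sqrt (4 - Real.cos x^2)))
      = -2 * Real.sqrt 3 := by
  rw [intervalIntegral.integral_eq_sub_of_hasDerivAt (fun x _ => hasDeriv_F (n:ℝ) x)
    ((G_cont (n:ℝ)).intervalIntegrable _ _)]
  have hπ : Real.cos ((2*(n:ℝ)-3) * (π/2)) = 0 := by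
    rw [show (2*(n:ℝ)-3) * (π/2) = (n:ℝ)*π - 3*(π/2) by ring, Real.cos_sub,
      Real.sin_int_mul_pi, show (3:ℝ)*(π/2) = π + π/2 by ring, Real.cos_add]
    simp
  rw [hπ]
  norm_num

lemma triRes_combo (n : ℤ) (hn : 2 ≤ n) :
    ((n:ℝ)-1) * triRes n - (15*(n:ℝ)-22) * triRes (n-1)
      + (15*(n:ℝ)-23) * triRes (n-2) - ((n:ℝ)-2) * triRes (n-3) = -4*Real.sqrt 3/π := by
  have htri : ∀ k : ℤ, 0 ≤ k → triRes k = (2/π) * ∫ x in (0:ℝ)..(π/2),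
      Real.sin (k*x)^2/(Real.sin x * Real.sqrt (4 - Real.cos x^2)) := by
    intro k hk; rw [triRes, if_pos hk]
  have e1 : ((n-1:ℤ):ℝ) = (n:ℝ)-1 := by push_cast; ring
  have e2 : ((n-2:ℤ):ℝ) = (n:ℝ)-2 := by push_cast; ring
  have e3 : ((n-3:ℤ):ℝ) = (n:ℝ)-3 := by push_cast; ring
  have i0 := integrand_integrable n
  have i1 := integrand_integrable (n-1); rw [e1] at i1
  have i2 := integrand_integrable (n-2); rw [e2] at i2
  have i3 := integrand_integrable (n-3); rw [e3] at i3
  rw [htri n (by omega), htri (n-1) (by omega), htri (n-2) (by omega), e1, e2]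
  have h3 : ((n:ℝ)-2) * triRes (n-3) = ((n:ℝ)-2) * ((2/π) * ∫ x in (0:ℝ)..(π/2),
      Real.sin (((n:ℝ)-3)*x)^2/(Real.sin x * Real.sqrt (4 - Real.cos x^2))) := by
    rcases eq_or_lt_of_le hn with h | h
    · rw [← h]; norm_num
    · rw [htri (n-3) (by omega), e3]
  rw [h3]
  have heq : Set.EqOn
      (fun x => ((n:ℝ)-1) * (Real.sin ((n:ℝ)*x)^2/(Real.sin x * Real.sqrt (4 - Real.cos x^2)))
        - (15*(n:ℝ)-22) * (Real.sin (((n:ℝ)-1)*x)^2/(Real.sin x * Real.sqrt (4 - Real.cos x^2)))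
        + (15*(n:ℝ)-23) * (Real.sin (((n:ℝ)-2)*x)^2/(Real.sin x * Real.sqrt (4 - Real.cos x^2)))
        - ((n:ℝ)-2) * (Real.sin (((n:ℝ)-3)*x)^2/(Real.sin x * Real.sqrt (4 - Real.cos x^2))))
      (fun x => -2*(2*(n:ℝ)-3) * Real.sin ((2*(n:ℝ)-3)*x) * Real.sqrt (4 - Real.cos x^2)
        + 2 * Real.cos ((2*(n:ℝ)-3)*x) * Real.sin x * Real.cos x / Real.sqrt (4 - Real.cos x^2))
      (Set.uIcc 0 (π/2)) := by
    intro x hx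
    rcases eq_or_ne (Real.sin x) 0 with hs | hs
    · simp only [hs]
      have hx0 : x = 0 := by
        rw [Set.uIcc_of_le (by positivity)] at hx
        by_contra h
        have h1 : 0 < x := lt_of_le_of_ne hx.1 (Ne.symm h)
        have h2 := Real.sin_pos_of_pos_of_lt_pi h1
          (lt_of_le_of_lt hx.2 (by linarith [Real.pi_pos]))
        exact h2.ne' hs
      subst hx0
      simp
    · exact pointwise_eq (n:ℝ) x hs
  have hcomb : (∫ x in (0:ℝ)..(π/2),
      (((n:ℝ)-1) * (Real.sin ((n:ℝ)*x)^2/(Real.sin x * Real.sqrt (4 - Real.cos x^2)))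
        - (15*(n:ℝ)-22) * (Real.sin (((n:ℝ)-1)*x)^2/(Real.sin x * Real.sqrt (4 - Real.cos x^2)))
        + (15*(n:ℝ)-23) * (Real.sin (((n:ℝ)-2)*x)^2/(Real.sin x * Real.sqrt (4 - Real.cos x^2)))
        - ((n:ℝ)-2) * (Real.sin (((n:ℝ)-3)*x)^2/(Real.sin x * Real.sqrt (4 - Real.cos x^2)))))
      = -2 * Real.sqrt 3 := by
    rw [intervalIntegral.integral_congr heq]
    exact int_G n
  rw [intervalIntegral.integral_sub (((i0.const_mul _).sub (i1.const_mul _)).add (i2.const_mul _))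
      (i3.const_mul _),
    intervalIntegral.integral_add ((i0.const_mul _).sub (i1.const_mul _)) (i2.const_mul _),
    intervalIntegral.integral_sub (i0.const_mul _) (i1.const_mul _),
    intervalIntegral.integral_const_mul, intervalIntegral.integral_const_mul,
    intervalIntegral.integral_const_mul, intervalIntegral.integral_const_mul] at hcomb
  have hπ := Real.pi_ne_zero
  field_simp
  linear_combination (2) * hcomb

theorem triRes_recurrence :
    triRes 0 = 0 ∧ triRes 1 = 1 / 3 ∧
    ∀ n : ℤ, 2 ≤ n →
      triRes n = ((15 * (n : ℝ) - 22) / ((n : ℝ) - 1)) * triRes (n - 1)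
        - ((15 * (n : ℝ) - 23) / ((n : ℝ) - 1)) * triRes (n - 2)
        + (((n : ℝ) - 2) / ((n : ℝ) - 1)) * triRes (n - 3)
        - 4 * Real.sqrt 3 / (π * ((n : ℝ) - 1)) := by
  refine ⟨?_, ?_, ?_⟩
  · simp [triRes]
  · rw [triRes, if_pos (by norm_num)]
    have heq : Set.EqOn
        (fun x => Real.sin (((1:ℤ):ℝ)*x)^2/(Real.sin x * Real.sqrt (4 - Real.cos x^2)))
        (fun x => Real.sin x / Real.sqrt (4 - Real.cos x^2)) (Set.uIcc 0 (π/2)) := by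
      intro x _
      simp only [Int.cast_one, one_mul]
      rcases eq_or_ne (Real.sin x) 0 with hs | hs
      · simp [hs]
      · rw [sq, mul_div_mul_left _ _ hs]
    rw [intervalIntegral.integral_congr heq]
    have hd : ∀ x ∈ Set.uIcc (0:ℝ) (π/2),
        HasDerivAt (fun y => -Real.arcsin (Real.cos y/2))
          (Real.sin x / Real.sqrt (4 - Real.cos x^2)) x := by
      intro x _
      have hc1 : -1 ≤ Real.cos x := Real.neg_one_le_cos x
      have hc2 : Real.cos x ≤ 1 := Real.cos_le_one x
      have h₁ : Real.cos x / 2 ≠ -1 := by intro h; nlinarith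
      have h₂ : Real.cos x / 2 ≠ 1 := by intro h; nlinarith
      have harc := ((Real.hasDerivAt_arcsin h₁ h₂).comp x
        ((Real.hasDerivAt_cos x).div_const 2)).neg
      refine harc.congr_deriv ?_
      rw [show (1:ℝ) - (Real.cos x/2)^2 = ((1:ℝ)/2)^2*(4 - Real.cos x^2) by ring,
        Real.sqrt_mul (by positivity), Real.sqrt_sq (by norm_num : (0:ℝ) ≤ 1/2)]
      have hne := sqrt_ne x
      field_simp
    rw [intervalIntegral.integral_eq_sub_of_hasDerivAt hd
      ((Continuous.div Real.continuous_sin sqrt_cont sqrt_ne).intervalIntegrable _ _)]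
    rw [Real.cos_pi_div_two, Real.cos_zero]
    have harc : Real.arcsin (1/2) = π/6 := by
      rw [← Real.sin_pi_div_six]
      exact Real.arcsin_sin (by linarith [Real.pi_pos]) (by linarith [Real.pi_pos])
    norm_num [harc]
    field_simp
    ring
  · intro n hn
    have hc := triRes_combo n hn
    have hn2 : (2:ℝ) ≤ (n:ℝ) := by exact_mod_cast hn
    have hn1 : ((n:ℝ)-1) ≠ 0 := by linarith
    have hπ := Real.pi_ne_zero
    field_simp at hc ⊢
    linear_combination hc
end

section
/- Let c_{i,j} be defined by the square-lattice Green's-function integral. Then c_{0,0} = 0, c_{0,1} = −1, and for every integer i ≥ 1, c_{i,i} = −(4/π)·∑_{k=1}^{i} 1/(2k−1). -/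
open Real MeasureTheory Finset

/-- The square-lattice Green's-function coefficient
`c_{i,j} = -(1/π) ∫_0^∞ (1/τ)(1 - ((τ-i)/(τ+i))^{i-j}((τ-1)/(τ+1))^{i+j}) dτ`,
equal to the entry `C_{O,(i,j)}` of the matrix `C` of the infinite square lattice. -/
noncomputable def squareGreen (i j : ℕ) : ℂ :=
  -(1 / (π : ℂ)) * ∫ τ in Set.Ioi (0:ℝ),
    (1 / (τ : ℂ)) * (1 - (((τ : ℂ) - Complex.I) / ((τ : ℂ) + Complex.I)) ^ ((i : ℤ) - (j : ℤ))
      * (((τ : ℂ) - 1) / ((τ : ℂ) + 1)) ^ ((i : ℤ) + (j : ℤ)))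

section Helpers
open Filter Topology Set


-- integrability of the imaginary-part integrand
lemma intB : IntegrableOn (fun τ : ℝ => 2*(1-τ)/((1+τ)*(1+τ^2))) (Set.Ioi 0) := by
  apply Integrable.mono (g := fun τ : ℝ => 2*(1+τ^2)⁻¹)
  · exact (integrable_inv_one_add_sq.const_mul 2).integrableOn
  · apply Measurable.aestronglyMeasurable
    fun_prop
  · filter_upwards [ae_restrict_mem measurableSet_Ioi] with τ (hτ : 0 < τ)
    have h2 : (0:ℝ) < 1 + τ^2 := by positivity
    have h1 : (0:ℝ) < 1 + τ := by linarith
    rw [Real.norm_eq_abs, Real.norm_eq_abs, abs_div, abs_mul, abs_mul,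
      abs_of_pos h1, abs_of_pos h2, abs_two, abs_mul, abs_two, abs_inv, abs_of_pos h2,
      div_le_iff₀ (by positivity)]
    have : |1 - τ| ≤ 1 + τ := abs_le.mpr ⟨by linarith, by linarith⟩
    calc 2 * |1-τ| ≤ 2 * (1+τ) := by linarith
    _ ≤ 2 * (1+τ^2)⁻¹ * ((1+τ)*(1+τ^2)) := by
        rw [mul_assoc]
        gcongr
        rw [mul_comm (1+τ), ← mul_assoc, inv_mul_cancel₀ h2.ne', one_mul]

lemma valB : ∫ τ in Set.Ioi (0:ℝ), 2*(1-τ)/((1+τ)*(1+τ^2)) = 0 := by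
  have key : ∫ τ in Set.Ioi (0:ℝ), 2*(1-τ)/((1+τ)*(1+τ^2))
      = 0 - (2*Real.log (1+0) - Real.log (1+(0:ℝ)^2)) := by
    apply integral_Ioi_of_hasDerivAt_of_tendsto
      (f := fun τ => 2*Real.log (1+τ) - Real.log (1+τ^2))
    · apply ContinuousAt.continuousWithinAt
      have h1 : ContinuousAt (fun τ : ℝ => Real.log (1+τ)) 0 :=
        (Real.continuousAt_log (by norm_num)).comp (by fun_prop)
      have h2 : ContinuousAt (fun τ : ℝ => Real.log (1+τ^2)) 0 :=
        (Real.continuousAt_log (by norm_num)).comp (by fun_prop)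
      exact (h1.const_mul 2).sub h2
    · intro x hx
      have hx : (0:ℝ) < x := hx
      have h1 : (0:ℝ) < 1 + x := by linarith
      have h2 : (0:ℝ) < 1 + x^2 := by positivity
      have d1 : HasDerivAt (fun τ : ℝ => Real.log (1+τ)) (1/(1+x)) x := by
        have : HasDerivAt (fun τ : ℝ => 1+τ) 1 x := (hasDerivAt_id x).const_add 1
        simpa using this.log h1.ne'
      have d2 : HasDerivAt (fun τ : ℝ => Real.log (1+τ^2)) ((2*x)/(1+x^2)) x := by
        have : HasDerivAt (fun τ : ℝ => 1+τ^2) (2*x) x := by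
          simpa using ((hasDerivAt_pow 2 x).const_add 1)
        simpa using this.log h2.ne'
      have := (d1.const_mul 2).fun_sub d2
      convert this using 1
      field_simp
      ring
    · exact intB
    · have hlim : Tendsto (fun τ : ℝ => (1+τ)^2/(1+τ^2)) atTop (𝓝 1) := by
        have h0 : Tendsto (fun τ : ℝ => 2*τ/(1+τ^2)) atTop (𝓝 0) := by
          apply tendsto_of_tendsto_of_tendsto_of_le_of_le' tendsto_const_nhds
            (h := fun τ : ℝ => 2 * τ⁻¹)
            (by simpa using tendsto_inv_atTop_zero.const_mul (2:ℝ))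
          · filter_upwards [eventually_gt_atTop (0:ℝ)] with τ hτ
            positivity
          · filter_upwards [eventually_ge_atTop (1:ℝ)] with τ hτ
            rw [div_le_iff₀ (by positivity)]
            have : (0:ℝ) < τ := by linarith
            rw [show (2:ℝ) * τ⁻¹ * (1 + τ ^ 2) = 2 * (1+τ^2) / τ by
              field_simp, le_div_iff₀ this]
            nlinarith
        have : Tendsto (fun τ : ℝ => 1 + 2*τ/(1+τ^2)) atTop (𝓝 (1+0)) :=
          tendsto_const_nhds.add h0
        rw [add_zero] at this
        apply this.congr'
        filter_upwards [eventually_gt_atTop (0:ℝ)] with τ hτ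
        have h2 : (0:ℝ) < 1 + τ^2 := by positivity
        field_simp
        ring
      have := ((Real.continuousAt_log one_ne_zero).tendsto.comp hlim)
      rw [Real.log_one] at this
      apply this.congr'
      filter_upwards [eventually_gt_atTop (0:ℝ)] with τ hτ
      have h1 : (0:ℝ) < 1 + τ := by linarith
      have h2 : (0:ℝ) < 1 + τ^2 := by positivity
      simp only [Function.comp]
      rw [Real.log_div (by positivity) h2.ne', Real.log_pow]
      push_cast
      ring
  simpa using key


lemma idB {τ : ℝ} (hτ : 0 < τ) :
    (1 / (τ : ℂ)) * (1 - (((τ : ℂ) - Complex.I) / ((τ : ℂ) + Complex.I)) ^ ((0 : ℤ) - (1 : ℤ))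
      * (((τ : ℂ) - 1) / ((τ : ℂ) + 1)) ^ ((0 : ℤ) + (1 : ℤ)))
    = ((2/(1+τ^2) : ℝ) : ℂ) + ((2*(1-τ)/((1+τ)*(1+τ^2)) : ℝ) : ℂ) * Complex.I := by
  have ht0 : (τ:ℂ) ≠ 0 := by exact_mod_cast hτ.ne'
  have hc1 : (1:ℂ) + (τ:ℂ) ≠ 0 := by
    intro h
    have : (1:ℝ) + τ = 0 := by exact_mod_cast congrArg Complex.re h
    linarith
  have ht1 : (τ:ℂ) + 1 ≠ 0 := by rw [add_comm]; exact hc1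
  have htI : (τ:ℂ) - Complex.I ≠ 0 := by
    intro h
    have := congrArg Complex.im h
    simp at this
  have hc2 : (1:ℂ) + (τ:ℂ)^2 ≠ 0 := by
    intro h
    have : (1:ℝ) + τ^2 = 0 := by exact_mod_cast congrArg Complex.re h
    nlinarith
  rw [show ((0:ℤ) - 1) = -1 by norm_num, show ((0:ℤ) + 1) = 1 by norm_num, zpow_neg_one, zpow_one,
    inv_div]
  push_cast
  field_simp
  ring_nf
  simp only [Complex.I_sq]
  ring

lemma part2 : squareGreen 0 1 = -1 := by
  have intA : IntegrableOn (fun τ : ℝ => 2/(1+τ^2)) (Set.Ioi 0) := by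
    have := (integrable_inv_one_add_sq.const_mul 2).integrableOn (s := Set.Ioi (0:ℝ))
    simpa [div_eq_mul_inv] using this
  have valA : ∫ τ in Set.Ioi (0:ℝ), 2/(1+τ^2) = π := by
    simp_rw [div_eq_mul_inv]
    rw [MeasureTheory.integral_const_mul, integral_Ioi_inv_one_add_sq]
    simp
    ring
  have h1 : Integrable (fun τ : ℝ => ((2/(1+τ^2) : ℝ) : ℂ)) (volume.restrict (Set.Ioi 0)) := by
    simpa using Complex.ofRealCLM.integrable_comp intA
  have h2 : Integrable (fun τ : ℝ => ((2*(1-τ)/((1+τ)*(1+τ^2)) : ℝ) : ℂ) * Complex.I)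
      (volume.restrict (Set.Ioi 0)) := by
    apply Integrable.mul_const
    simpa using Complex.ofRealCLM.integrable_comp intB
  have e1 : (∫ τ in Set.Ioi (0:ℝ), ((2/(1+τ^2) : ℝ) : ℂ))
      = ((∫ τ in Set.Ioi (0:ℝ), 2/(1+τ^2) : ℝ) : ℂ) := by
    simpa using Complex.ofRealCLM.integral_comp_comm intA
  have e2 : (∫ τ in Set.Ioi (0:ℝ), ((2*(1-τ)/((1+τ)*(1+τ^2)) : ℝ) : ℂ))
      = ((∫ τ in Set.Ioi (0:ℝ), 2*(1-τ)/((1+τ)*(1+τ^2)) : ℝ) : ℂ) := by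
    simpa using Complex.ofRealCLM.integral_comp_comm intB
  have key : (∫ τ in Set.Ioi (0:ℝ),
      (1 / (τ : ℂ)) * (1 - (((τ : ℂ) - Complex.I) / ((τ : ℂ) + Complex.I)) ^ (((0:ℕ):ℤ) - ((1:ℕ):ℤ))
        * (((τ : ℂ) - 1) / ((τ : ℂ) + 1)) ^ (((0:ℕ) : ℤ) + ((1:ℕ) : ℤ)))) = (π : ℂ) := by
    rw [setIntegral_congr_fun measurableSet_Ioi
      (g := fun τ : ℝ => ((2/(1+τ^2) : ℝ) : ℂ) + ((2*(1-τ)/((1+τ)*(1+τ^2)) : ℝ) : ℂ) * Complex.I)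
      (fun τ hτ => by simpa using idB hτ)]
    rw [MeasureTheory.integral_add h1 h2, MeasureTheory.integral_mul_const, e1, e2, valA, valB]
    simp
  rw [squareGreen, key]
  have : (π:ℂ) ≠ 0 := by exact_mod_cast Real.pi_ne_zero
  field_simp

noncomputable def uu (τ : ℝ) : ℝ := (τ - 1) / (τ + 1)
noncomputable def GG (i : ℕ) (y : ℝ) : ℝ := 2 * ∑ m ∈ range i, y^(2*m+1) / (2*m+1)

lemma hGG_cont (i : ℕ) : Continuous (GG i) := by
  unfold GG; fun_prop

lemma uu_deriv {x : ℝ} (hx : 0 < x) : HasDerivAt uu (2/(x+1)^2) x := by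
  have h1 : (x:ℝ) + 1 ≠ 0 := by linarith
  have := ((hasDerivAt_id x).sub_const 1).fun_div ((hasDerivAt_id x).add_const 1) h1
  refine this.congr_deriv ?_
  simp only [id]
  field_simp
  ring

lemma keyFTC (i : ℕ) :
    ∫ τ in Set.Ioi (0:ℝ), (1/τ) * (1 - (uu τ)^(2*i))
      = 4 * ∑ m ∈ range i, 1 / (2*(m:ℝ)+1) := by
  have habs : ∀ x : ℝ, 0 < x → |uu x| ≤ 1 := by
    intro x hx
    rw [uu, abs_div, abs_of_pos (by linarith : (0:ℝ) < x + 1), div_le_one (by linarith)]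
    exact abs_le.mpr ⟨by linarith, by linarith⟩
  have key : ∫ τ in Set.Ioi (0:ℝ), (1/τ) * (1 - (uu τ)^(2*i))
      = GG i 1 - GG i (uu 0) := by
    apply integral_Ioi_of_hasDerivAt_of_nonneg (g := fun τ => GG i (uu τ))
    · apply ContinuousAt.continuousWithinAt
      apply ((hGG_cont i).continuousAt).comp
      unfold uu
      apply ContinuousAt.div (by fun_prop) (by fun_prop)
      norm_num
    · intro x hx
      have hx : (0:ℝ) < x := hx
      have h1 : x + 1 ≠ 0 := by linarith
      have hu := uu_deriv hx
      have hsum : HasDerivAt (fun τ => GG i (uu τ))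
          (2 * ∑ m ∈ range i, (uu x)^(2*m) * (2/(x+1)^2)) x := by
        unfold GG
        apply HasDerivAt.const_mul
        apply HasDerivAt.fun_sum
        intro m _
        have hp := (hu.pow (2*m+1)).div_const (2*(m:ℝ)+1)
        refine hp.congr_deriv ?_
        push_cast
        have : (2*(m:ℝ)+1) ≠ 0 := by positivity
        field_simp
      convert hsum using 1
      -- identity: (1/x)(1 - u^{2i}) = 2 Σ u^{2m} (2/(x+1)^2)
      have hgeom := geom_sum_mul ((uu x)^2) i
      have h2 : 1 - (uu x)^2 = 4*x/(x+1)^2 := by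
        unfold uu
        field_simp
        ring
      calc (1/x) * (1 - (uu x)^(2*i))
          = (1/x) * ((1 - (uu x)^2) * ∑ m ∈ range i, ((uu x)^2)^m) := by
            rw [pow_mul]
            linear_combination (1/x) * hgeom
        _ = 2 * ∑ m ∈ range i, (uu x)^(2*m) * (2/(x+1)^2) := by
            rw [h2]
            have hterm : ∀ m ∈ range i,
                (uu x)^(2*m) * (2/(x+1)^2) = (2/(x+1)^2) * ((uu x)^2)^m := by
              intro m _; rw [pow_mul]; ring
            rw [Finset.sum_congr rfl hterm, ← Finset.mul_sum]
            field_simp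
            ring
    · intro x hx
      have hx : (0:ℝ) < x := hx
      have h2 : (uu x)^(2*i) ≤ 1 := by
        rw [← Even.pow_abs (even_two_mul i)]
        exact pow_le_one₀ (abs_nonneg _) (habs x hx)
      have : 0 ≤ 1/x := by positivity
      exact mul_nonneg this (by linarith)
    · have hu_lim : Tendsto uu atTop (𝓝 1) := by
        have h0 : Tendsto (fun τ : ℝ => 2*(τ+1)⁻¹) atTop (𝓝 0) := by
          have ha : Tendsto (fun τ : ℝ => τ + 1) atTop atTop :=
            tendsto_atTop_add_const_right atTop 1 tendsto_id
          have hb := ha.inv_tendsto_atTop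
          simpa using hb.const_mul (2:ℝ)
        have : Tendsto (fun τ : ℝ => 1 - 2*(τ+1)⁻¹) atTop (𝓝 (1-0)) :=
          tendsto_const_nhds.sub h0
        rw [sub_zero] at this
        apply this.congr'
        filter_upwards [eventually_gt_atTop (0:ℝ)] with τ hτ
        have h1 : τ + 1 ≠ 0 := by linarith
        unfold uu
        field_simp
        ring
      exact ((hGG_cont i).continuousAt.tendsto).comp hu_lim
  rw [key]
  have h0 : uu 0 = -1 := by unfold uu; norm_num
  rw [h0]
  have hneg : ∀ m:ℕ, ((-1:ℝ))^(2*m+1) = -1 := fun m => Odd.neg_one_pow ⟨m, by ring⟩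
  simp only [GG, one_pow, hneg, neg_div, Finset.sum_neg_distrib, mul_neg, sub_neg_eq_add]
  ring


lemma part3 (i : ℕ) (hi : 1 ≤ i) :
    squareGreen i i = ((-(4 / π) * ∑ k ∈ Finset.Icc 1 i, 1 / (2 * (k : ℝ) - 1) : ℝ) : ℂ) := by
  have e : Set.EqOn
      (fun τ : ℝ => (1 / (τ : ℂ)) * (1 - (((τ : ℂ) - Complex.I) / ((τ : ℂ) + Complex.I)) ^ ((i : ℤ) - (i : ℤ))
        * (((τ : ℂ) - 1) / ((τ : ℂ) + 1)) ^ ((i : ℤ) + (i : ℤ))))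
      (fun τ : ℝ => (((1/τ) * (1 - (uu τ)^(2*i)) : ℝ) : ℂ)) (Set.Ioi 0) := by
    intro τ hτ
    simp only [sub_self, zpow_zero, one_mul,
      show (i:ℤ)+(i:ℤ) = ((2*i : ℕ) : ℤ) by push_cast; ring, zpow_natCast, uu]
    push_cast
    ring
  rw [squareGreen, setIntegral_congr_fun measurableSet_Ioi e,
    show (∫ x in Set.Ioi (0:ℝ), (((1/x) * (1 - (uu x)^(2*i)) : ℝ) : ℂ))
      = (((∫ x in Set.Ioi (0:ℝ), (1/x) * (1 - (uu x)^(2*i)) : ℝ)) : ℂ) from integral_ofReal,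
    keyFTC i]
  have hsum : ∑ k ∈ Finset.Icc 1 i, 1 / (2 * (k : ℝ) - 1)
      = ∑ m ∈ range i, 1 / (2*(m:ℝ)+1) := by
    rw [← Finset.Ico_add_one_right_eq_Icc, Finset.sum_Ico_eq_sum_range]
    apply Finset.sum_congr (by norm_num)
    intro m _
    push_cast
    ring_nf
  rw [hsum]
  have hπ : (π:ℂ) ≠ 0 := by exact_mod_cast Real.pi_ne_zero
  push_cast
  field_simp

end Helpers

theorem squareGreen_diagonal :
    squareGreen 0 0 = 0 ∧ squareGreen 0 1 = -1 ∧
    ∀ i : ℕ, 1 ≤ i →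
      squareGreen i i =
        ((-(4 / π) * ∑ k ∈ Finset.Icc 1 i, 1 / (2 * (k : ℝ) - 1) : ℝ) : ℂ) := by
  exact ⟨by simp [squareGreen], part2, part3⟩
end

section
/- Let c_{i,j} be defined by the square-lattice Green's-function integral. Then for every integer j ≥ 2, c_{0,j} = 4·c_{0,j−1} − c_{0,j−2} − 2·c_{1,j−1}. -/
set_option maxHeartbeats 1000000

open Real MeasureTheory Complex Set Filter

noncomputable def Faux (m l : ℕ) (τ : ℝ) : ℂ :=
  (1 / (τ : ℂ)) * (1 - (((τ:ℂ) + Complex.I) / ((τ:ℂ) - Complex.I)) ^ m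
    * (((τ:ℂ) - 1) / ((τ:ℂ) + 1)) ^ l)

lemma norm_one_sub_pow_le (z : ℂ) (hz : ‖z‖ ≤ 1) (n : ℕ) :
    ‖1 - z ^ n‖ ≤ n * ‖1 - z‖ := by
  induction n with
  | zero => simp
  | succ n ih =>
    have h : (1 : ℂ) - z ^ (n + 1) = (1 - z ^ n) + z ^ n * (1 - z) := by ring
    calc ‖1 - z ^ (n+1)‖ ≤ ‖1 - z ^ n‖ + ‖z ^ n * (1 - z)‖ := by rw [h]; exact norm_add_le _ _
    _ ≤ n * ‖1 - z‖ + 1 * ‖1 - z‖ := by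
        refine add_le_add ih ?_
        rw [norm_mul, norm_pow]
        exact mul_le_mul (pow_le_one₀ (norm_nonneg z) hz) le_rfl (norm_nonneg _) zero_le_one
    _ = (n + 1 : ℕ) * ‖1 - z‖ := by push_cast; ring

lemma norm_one_sub_mul_pow_le (x y : ℂ) (hx : ‖x‖ ≤ 1) (hy : ‖y‖ ≤ 1) (m l : ℕ) :
    ‖1 - x ^ m * y ^ l‖ ≤ m * ‖1 - x‖ + l * ‖1 - y‖ := by
  have h : (1 : ℂ) - x ^ m * y ^ l = (1 - x ^ m) + x ^ m * (1 - y ^ l) := by ring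
  calc ‖1 - x ^ m * y ^ l‖ ≤ ‖1 - x ^ m‖ + ‖x ^ m‖ * ‖1 - y ^ l‖ := by
        rw [h]; exact (norm_add_le _ _).trans (by rw [norm_mul])
  _ ≤ m * ‖1 - x‖ + 1 * (l * ‖1 - y‖) := by
      refine add_le_add (norm_one_sub_pow_le x hx m) (mul_le_mul ?_ (norm_one_sub_pow_le y hy l)
        (norm_nonneg _) zero_le_one)
      rw [norm_pow]; exact pow_le_one₀ (norm_nonneg x) hx
  _ = m * ‖1 - x‖ + l * ‖1 - y‖ := by ring

lemma Faux_integrableOn (m l : ℕ) (h : Even (m + l)) :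
    IntegrableOn (Faux m l) (Set.Ioi (0:ℝ)) := by
  have hmaj : ∀ τ ∈ Set.Ioi (0:ℝ), ‖Faux m l τ‖ ≤ (4*(m+l)) * (1 + τ^2)⁻¹ := by
    intro τ hτ
    rw [Set.mem_Ioi] at hτ
    set x : ℂ := ((τ:ℂ) + Complex.I) / ((τ:ℂ) - Complex.I) with hxdef
    set y : ℂ := ((τ:ℂ) - 1) / ((τ:ℂ) + 1) with hydef
    have hτI : ‖((τ:ℂ) - Complex.I)‖ ^ 2 = τ^2 + 1 := by
      rw [Complex.sq_norm, Complex.normSq_apply]; simp; ring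
    have hτI1 : (1:ℝ) ≤ ‖((τ:ℂ) - Complex.I)‖ := by nlinarith [norm_nonneg ((τ:ℂ) - Complex.I)]
    have hτIτ : τ ≤ ‖((τ:ℂ) - Complex.I)‖ := by nlinarith [norm_nonneg ((τ:ℂ) - Complex.I)]
    have hτIpos : (0:ℝ) < ‖((τ:ℂ) - Complex.I)‖ := lt_of_lt_of_le one_pos hτI1
    have hne : ((τ:ℂ) - Complex.I) ≠ 0 := by
      intro hc; rw [hc] at hτIpos; simp at hτIpos
    have hτ1 : ((τ:ℂ) + 1) ≠ 0 := by
      intro hc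
      have : ((τ + 1 : ℝ) : ℂ) = 0 := by push_cast; linear_combination hc
      rw [Complex.ofReal_eq_zero] at this; linarith
    -- norms of x, y
    have hxnorm : ‖x‖ = 1 := by
      rw [hxdef, norm_div]
      have h1 : ‖((τ:ℂ) + Complex.I)‖ ^ 2 = τ^2 + 1 := by
        rw [Complex.sq_norm, Complex.normSq_apply]; simp; ring
      have : ‖((τ:ℂ) + Complex.I)‖ = ‖((τ:ℂ) - Complex.I)‖ := by
        nlinarith [norm_nonneg ((τ:ℂ) + Complex.I), norm_nonneg ((τ:ℂ) - Complex.I)]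
      rw [this, div_self (ne_of_gt hτIpos)]
    have hynorm : ‖y‖ ≤ 1 := by
      rw [hydef]
      have : ((τ:ℂ) - 1) / ((τ:ℂ) + 1) = (((τ - 1)/(τ + 1) : ℝ) : ℂ) := by push_cast; ring
      rw [this, Complex.norm_real, Real.norm_eq_abs, abs_div, abs_of_pos (by linarith : (0:ℝ) < τ + 1),
        div_le_one (by linarith)]
      rw [abs_le]; constructor <;> linarith
    -- 1 - x and 1 + x
    have h1x : ‖1 - x‖ ≤ 2 / τ := by
      have : (1:ℂ) - x = (-2*Complex.I) / ((τ:ℂ) - Complex.I) := by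
        rw [hxdef]; field_simp; ring
      rw [this, norm_div]
      have h2 : ‖(-2*Complex.I : ℂ)‖ = 2 := by
        rw [norm_mul, Complex.norm_I, mul_one, norm_neg]
        norm_num
      rw [h2]
      exact div_le_div_of_nonneg_left (by norm_num) (by positivity) hτIτ
    have h1x' : ‖1 + x‖ ≤ 2 * τ := by
      have : (1:ℂ) + x = (2*(τ:ℂ)) / ((τ:ℂ) - Complex.I) := by
        rw [hxdef]; field_simp; ring
      rw [this, norm_div]
      have h2 : ‖(2*(τ:ℂ) : ℂ)‖ = 2 * τ := by
        rw [norm_mul]; simp [abs_of_pos hτ]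
      rw [h2, div_le_iff₀ hτIpos]
      nlinarith
    have h1y : ‖1 - y‖ ≤ 2 / τ := by
      have : (1:ℂ) - y = ((2/(τ+1) : ℝ) : ℂ) := by rw [hydef]; push_cast; field_simp; norm_num
      rw [this, Complex.norm_real, Real.norm_eq_abs, abs_of_pos (by positivity)]
      exact div_le_div_of_nonneg_left (by norm_num) hτ (by linarith)
    have h1y' : ‖1 - (-y)‖ ≤ 2 * τ := by
      have he : (1:ℂ) - (-y) = ((2*τ/(τ+1) : ℝ) : ℂ) := by rw [hydef]; push_cast; field_simp; ring
      have h0 : (0:ℝ) ≤ 2*τ/(τ+1) := by positivity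
      rw [he, Complex.norm_real, Real.norm_eq_abs, _root_.abs_of_nonneg h0, div_le_iff₀ (by linarith)]
      nlinarith
    have h1x'' : ‖1 - (-x)‖ ≤ 2 * τ := by simpa [sub_neg_eq_add] using h1x'
    -- two bounds on the bracket
    have hbase : ‖Faux m l τ‖ = (1/τ) * ‖1 - x ^ m * y ^ l‖ := by
      rw [Faux, norm_mul, ← hxdef, ← hydef]
      congr 1
      rw [norm_div, norm_one]
      simp [Complex.norm_real, abs_of_pos hτ]
    have hb1 : ‖1 - x ^ m * y ^ l‖ ≤ (2*(m+l)) / τ := by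
      calc ‖1 - x ^ m * y ^ l‖ ≤ m * ‖1 - x‖ + l * ‖1 - y‖ :=
            norm_one_sub_mul_pow_le x y hxnorm.le hynorm m l
      _ ≤ m * (2/τ) + l * (2/τ) := by
          refine add_le_add (mul_le_mul_of_nonneg_left h1x (by positivity))
            (mul_le_mul_of_nonneg_left h1y (by positivity))
      _ = (2*(m+l)) / τ := by field_simp
    have hb2 : ‖1 - x ^ m * y ^ l‖ ≤ (2*(m+l)) * τ := by
      have hflip : (-x) ^ m * (-y) ^ l = x ^ m * y ^ l := by
        rw [neg_pow x m, neg_pow y l, mul_mul_mul_comm, ← pow_add, Even.neg_one_pow h, one_mul]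
      rw [← hflip]
      calc ‖1 - (-x) ^ m * (-y) ^ l‖ ≤ m * ‖1 - (-x)‖ + l * ‖1 - (-y)‖ :=
            norm_one_sub_mul_pow_le (-x) (-y) (by rw [norm_neg, hxnorm]) (by rw [norm_neg]; exact hynorm) m l
      _ ≤ m * (2*τ) + l * (2*τ) := by
          refine add_le_add (mul_le_mul_of_nonneg_left h1x'' (by positivity))
            (mul_le_mul_of_nonneg_left h1y' (by positivity))
      _ = (2*(m+l)) * τ := by ring
    rw [hbase]
    rcases le_total τ 1 with hle | hle
    · calc (1/τ) * ‖1 - x ^ m * y ^ l‖ ≤ (1/τ) * ((2*(m+l)) * τ) :=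
            mul_le_mul_of_nonneg_left hb2 (by positivity)
      _ = 2*(m+l) := by field_simp
      _ ≤ (4*(m+l)) * (1 + τ^2)⁻¹ := by
          have h3 : (0:ℝ) < 1 + τ^2 := by positivity
          have hM : (0:ℝ) ≤ (m:ℝ) + l := by positivity
          rw [← div_eq_mul_inv, le_div_iff₀ h3]
          nlinarith [mul_nonneg hM (by nlinarith : (0:ℝ) ≤ 1 - τ^2)]
    · calc (1/τ) * ‖1 - x ^ m * y ^ l‖ ≤ (1/τ) * ((2*(m+l)) / τ) :=
            mul_le_mul_of_nonneg_left hb1 (by positivity)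
      _ = 2*(m+l) / τ^2 := by rw [div_mul_div_comm, one_mul, ← pow_two]
      _ ≤ (4*(m+l)) * (1 + τ^2)⁻¹ := by
          have h3 : (0:ℝ) < 1 + τ^2 := by positivity
          have hτ2 : (0:ℝ) < τ^2 := by positivity
          have hM : (0:ℝ) ≤ (m:ℝ) + l := by positivity
          rw [← div_eq_mul_inv, div_le_div_iff₀ hτ2 h3]
          nlinarith [mul_nonneg hM (by nlinarith : (0:ℝ) ≤ τ^2 - 1)]
  have hcont : ContinuousOn (Faux m l) (Set.Ioi (0:ℝ)) := by
    have hre : ContinuousOn (fun τ:ℝ => (τ:ℂ)) (Set.Ioi (0:ℝ)) :=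
      Complex.continuous_ofReal.continuousOn
    have h0 : ∀ τ ∈ Set.Ioi (0:ℝ), ((τ:ℂ)) ≠ 0 := fun τ hτ =>
      Complex.ofReal_ne_zero.mpr (ne_of_gt hτ)
    have hI : ∀ τ ∈ Set.Ioi (0:ℝ), ((τ:ℂ) - Complex.I) ≠ 0 := by
      intro τ _ hc
      have := congrArg Complex.im hc
      simp at this
    have h1 : ∀ τ ∈ Set.Ioi (0:ℝ), ((τ:ℂ) + 1) ≠ 0 := by
      intro τ hτ hc
      rw [Set.mem_Ioi] at hτ
      have : ((τ + 1 : ℝ) : ℂ) = 0 := by push_cast; linear_combination hc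
      rw [Complex.ofReal_eq_zero] at this; linarith
    refine ContinuousOn.mul (continuousOn_const.div hre h0) ?_
    refine continuousOn_const.sub (ContinuousOn.mul (ContinuousOn.pow ?_ m) (ContinuousOn.pow ?_ l))
    · exact (hre.add continuousOn_const).div (hre.sub continuousOn_const) hI
    · exact (hre.sub continuousOn_const).div (hre.add continuousOn_const) h1
  refine Integrable.mono' ((integrable_inv_one_add_sq.const_mul (4*((m:ℝ)+l))).integrableOn)
    (hcont.aestronglyMeasurable measurableSet_Ioi) ?_
  rw [ae_restrict_iff' measurableSet_Ioi]
  exact Filter.Eventually.of_forall (fun τ hτ => by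
    simpa using hmaj τ hτ)

noncomputable def Wf (τ : ℝ) : ℂ :=
  (((τ:ℂ) + Complex.I) * ((τ:ℂ) - 1)) / (((τ:ℂ) - Complex.I) * ((τ:ℂ) + 1))

noncomputable def Wd (τ : ℝ) : ℂ :=
  ((1 * ((τ:ℂ) - 1) + ((τ:ℂ) + Complex.I) * 1) * (((τ:ℂ) - Complex.I) * ((τ:ℂ) + 1))
    - ((τ:ℂ) + Complex.I) * ((τ:ℂ) - 1) * (1 * ((τ:ℂ) + 1) + ((τ:ℂ) - Complex.I) * 1))
    / (((τ:ℂ) - Complex.I) * ((τ:ℂ) + 1)) ^ 2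

lemma sub_I_ne (τ : ℝ) : ((τ:ℂ) - Complex.I) ≠ 0 := by
  intro hc
  have := congrArg Complex.im hc
  simp at this

lemma add_one_ne (τ : ℝ) (hτ : 0 ≤ τ) : ((τ:ℂ) + 1) ≠ 0 := by
  intro hc
  have : ((τ + 1 : ℝ) : ℂ) = 0 := by push_cast; linear_combination hc
  rw [Complex.ofReal_eq_zero] at this; linarith

lemma Wfz_hasDerivAt (τ : ℝ) (hτ : 0 ≤ τ) :
    HasDerivAt (fun z : ℂ => ((z + Complex.I) * (z - 1)) / ((z - Complex.I) * (z + 1)))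
      (Wd τ) (τ:ℂ) := by
    have hnum : HasDerivAt (fun z : ℂ => (z + Complex.I) * (z - 1))
        (1 * ((τ:ℂ) - 1) + ((τ:ℂ) + Complex.I) * 1) (τ:ℂ) :=
      (((hasDerivAt_id _).add_const Complex.I).mul ((hasDerivAt_id _).sub_const 1))
    have hden : HasDerivAt (fun z : ℂ => (z - Complex.I) * (z + 1))
        (1 * ((τ:ℂ) + 1) + ((τ:ℂ) - Complex.I) * 1) (τ:ℂ) :=
      (((hasDerivAt_id _).sub_const Complex.I).mul ((hasDerivAt_id _).add_const 1))
    exact hnum.div hden (mul_ne_zero (sub_I_ne τ) (add_one_ne τ hτ))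

lemma Wf_hasDerivAt (τ : ℝ) (hτ : 0 ≤ τ) : HasDerivAt Wf (Wd τ) τ :=
  (Wfz_hasDerivAt τ hτ).comp_ofReal

lemma Wf_tendsto : Filter.Tendsto Wf Filter.atTop (nhds 1) := by
  have h0 : Filter.Tendsto (fun τ : ℝ => ((τ:ℂ))⁻¹) Filter.atTop (nhds 0) := by
    have h := (Complex.continuous_ofReal.tendsto 0).comp tendsto_inv_atTop_zero
    exact h.congr (fun τ => by simp [Function.comp, Complex.ofReal_inv])
  have hq : Filter.Tendsto (fun τ : ℝ =>
      ((1 + Complex.I * ((τ:ℂ))⁻¹) * (1 - ((τ:ℂ))⁻¹))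
        / ((1 - Complex.I * ((τ:ℂ))⁻¹) * (1 + ((τ:ℂ))⁻¹))) Filter.atTop (nhds 1) := by
    have h := (((tendsto_const_nhds (x := (1:ℂ))).add ((tendsto_const_nhds (x := Complex.I)).mul h0)).mul
      ((tendsto_const_nhds (x := (1:ℂ))).sub h0)).div
      ((((tendsto_const_nhds (x := (1:ℂ))).sub ((tendsto_const_nhds (x := Complex.I)).mul h0)).mul
      ((tendsto_const_nhds (x := (1:ℂ))).add h0))) (by norm_num)
    simp only [mul_zero, add_zero, sub_zero, mul_one, div_one] at h
    exact h
  refine hq.congr' ?_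
  filter_upwards [Filter.eventually_gt_atTop (0:ℝ)] with τ hτ
  have h0' : ((τ:ℂ)) ≠ 0 := Complex.ofReal_ne_zero.mpr (ne_of_gt hτ)
  rw [Wf]
  field_simp

lemma Wf_zero : Wf 0 = 1 := by
  rw [Wf, div_eq_one_iff_eq (mul_ne_zero (sub_I_ne 0) (add_one_ne 0 le_rfl))]
  push_cast
  ring

lemma integral_Dk (k : ℕ)
    (hint : IntegrableOn (fun τ : ℝ => ((k:ℂ) + 1) * Wf τ ^ k * Wd τ) (Set.Ioi (0:ℝ))) :
    ∫ τ in Set.Ioi (0:ℝ), ((k:ℂ) + 1) * Wf τ ^ k * Wd τ = 0 := by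
  have hderiv : ∀ τ ∈ Set.Ioi (0:ℝ), HasDerivAt (fun τ => Wf τ ^ (k+1))
      (((k:ℂ) + 1) * Wf τ ^ k * Wd τ) τ := by
    intro τ hτ
    rw [Set.mem_Ioi] at hτ
    have h := ((Wfz_hasDerivAt τ hτ.le).pow (k+1)).comp_ofReal
    have h2 : ((k:ℂ) + 1) = ((k+1:ℕ):ℂ) := by push_cast; ring
    rw [h2]
    exact h
  have hcont : ContinuousWithinAt (fun τ => Wf τ ^ (k+1)) (Set.Ici (0:ℝ)) 0 :=
    (((Wf_hasDerivAt 0 le_rfl).continuousAt.pow (k+1)).continuousWithinAt)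
  have htend : Filter.Tendsto (fun τ => Wf τ ^ (k+1)) Filter.atTop (nhds 1) := by
    have := Wf_tendsto.pow (k+1)
    simpa using this
  have h := integral_Ioi_of_hasDerivAt_of_tendsto hcont hderiv hint htend
  rw [h, Wf_zero, one_pow, sub_self]
lemma small (τ P i : ℂ) (hi : i^2 = -1) (hτ0 : τ ≠ 0) (hmi : τ - i ≠ 0) (h1 : τ + 1 ≠ 0) :
    (1/τ) * (1 - P * ((τ+i)/(τ-i))^2 * ((τ-1)/(τ+1))^2)
      = 4 * ((1/τ) * (1 - P * (((τ+i)/(τ-i)) * ((τ-1)/(τ+1)))))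
        - (1/τ) * (1 - P)
        - 2 * ((1/τ) * (1 - P * ((τ-1)/(τ+1))^2))
        + 2 * i * P * (((1 * (τ - 1) + (τ + i) * 1) * ((τ - i) * (τ + 1))
            - (τ + i) * (τ - 1) * (1 * (τ + 1) + (τ - i) * 1))
            / ((τ - i) * (τ + 1)) ^ 2) := by
  have hY : τ * ((τ - i) * (τ + 1)) * τ * (τ * (τ + 1) ^ 2) ≠ 0 :=
    mul_ne_zero (mul_ne_zero (mul_ne_zero hτ0 (mul_ne_zero hmi h1)) hτ0)
      (mul_ne_zero hτ0 (pow_ne_zero 2 h1))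
  field_simp
  have hi3 : i^3 = -i := by linear_combination i * hi
  have hi4 : i^4 = 1 := by linear_combination (i^2 - 1) * hi
  have hi5 : i^5 = i := by linear_combination (i^3 - i) * hi
  have hi6 : i^6 = -1 := by linear_combination (i^4 - i^2 + 1) * hi
  have hi7 : i^7 = -i := by linear_combination (i^5 - i^3 + i) * hi
  have hi8 : i^8 = 1 := by linear_combination (i^6 - i^4 + i^2 - 1) * hi
  ring_nf
  simp only [hi, hi3, hi4, hi5, hi6, hi7, hi8]
  ring

lemma key (k : ℕ) (τ : ℝ) (hτ : 0 < τ) :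
    Faux (k+2) (k+2) τ
      = 4 * Faux (k+1) (k+1) τ - Faux k k τ - 2 * Faux k (k+2) τ
        + (2 * Complex.I / ((k:ℂ)+1)) * (((k:ℂ)+1) * Wf τ ^ k * Wd τ) := by
  have hτ0 : ((τ:ℂ)) ≠ 0 := Complex.ofReal_ne_zero.mpr (ne_of_gt hτ)
  have hk1 : ((k:ℂ)+1) ≠ 0 := Nat.cast_add_one_ne_zero k
  have hWk : Wf τ ^ k = (((τ:ℂ) + Complex.I)/((τ:ℂ) - Complex.I))^k
      * ((((τ:ℂ) - 1)/((τ:ℂ) + 1)))^k := by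
    rw [Wf, ← mul_pow, div_mul_div_comm]
  have hcanc : (2 * Complex.I / ((k:ℂ)+1)) * (((k:ℂ)+1) * Wf τ ^ k * Wd τ)
      = 2 * Complex.I * (Wf τ ^ k * Wd τ) := by
    field_simp
  have hsmall := small (τ:ℂ)
    ((((τ:ℂ) + Complex.I)/((τ:ℂ) - Complex.I))^k * ((((τ:ℂ) - 1)/((τ:ℂ) + 1)))^k)
    Complex.I Complex.I_sq hτ0 (sub_I_ne τ) (add_one_ne τ hτ.le)
  rw [hcanc, hWk]
  simp only [Faux, Wd]
  linear_combination hsmall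

lemma sq0 (n : ℕ) : squareGreen 0 n = -(1/(π:ℂ)) * ∫ τ in Set.Ioi (0:ℝ), Faux n n τ := by
  rw [squareGreen]
  congr 1
  refine integral_congr_ae (Filter.Eventually.of_forall fun τ => ?_)
  have h1 : ((0:ℕ):ℤ) - ((n:ℕ):ℤ) = -(n:ℤ) := by simp
  have h2 : ((0:ℕ):ℤ) + ((n:ℕ):ℤ) = (n:ℤ) := by simp
  simp only [Faux, h1, h2, zpow_neg, zpow_natCast, ← inv_pow, inv_div]

lemma sq1 (k : ℕ) :
    squareGreen 1 (k+1) = -(1/(π:ℂ)) * ∫ τ in Set.Ioi (0:ℝ), Faux k (k+2) τ := by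
  rw [squareGreen]
  congr 1
  refine integral_congr_ae (Filter.Eventually.of_forall fun τ => ?_)
  have h1 : ((1:ℕ):ℤ) - ((k+1:ℕ):ℤ) = -(k:ℤ) := by push_cast; ring
  have h2 : ((1:ℕ):ℤ) + ((k+1:ℕ):ℤ) = ((k+2:ℕ):ℤ) := by push_cast; ring
  simp only [Faux, h1, h2, zpow_neg, zpow_natCast, ← inv_pow, inv_div]

theorem squareGreen_axis_recurrence :
    ∀ j : ℕ, 2 ≤ j →
      squareGreen 0 j =
        4 * squareGreen 0 (j - 1) - squareGreen 0 (j - 2) - 2 * squareGreen 1 (j - 1) := by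
  intro j hj
  obtain ⟨k, rfl⟩ : ∃ k, j = k + 2 := ⟨j - 2, by omega⟩
  have hj1 : k + 2 - 1 = k + 1 := by omega
  have hj2 : k + 2 - 2 = k := by omega
  rw [hj1, hj2, sq0 (k+2), sq0 (k+1), sq0 k, sq1 k]
  have i0 := Faux_integrableOn (k+2) (k+2) ⟨k+2, by ring⟩
  have i1 := Faux_integrableOn (k+1) (k+1) ⟨k+1, by ring⟩
  have i2 := Faux_integrableOn k k ⟨k, by ring⟩
  have i3 := Faux_integrableOn k (k+2) ⟨k+1, by ring⟩
  have hk1 : ((k:ℂ)+1) ≠ 0 := Nat.cast_add_one_ne_zero k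
  have hDeq : Set.EqOn
      (fun τ : ℝ => (((k:ℂ)+1)/(2*Complex.I)) * (Faux (k+2) (k+2) τ - 4 * Faux (k+1) (k+1) τ
        + Faux k k τ + 2 * Faux k (k+2) τ))
      (fun τ : ℝ => ((k:ℂ)+1) * Wf τ ^ k * Wd τ) (Set.Ioi 0) := by
    intro τ hτ
    have h := key k τ hτ
    have h' : (2*Complex.I/((k:ℂ)+1)) * (((k:ℂ)+1) * Wf τ ^ k * Wd τ)
        = Faux (k+2) (k+2) τ - 4 * Faux (k+1) (k+1) τ + Faux k k τ + 2 * Faux k (k+2) τ := by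
      linear_combination -h
    have hcc : ∀ z : ℂ, (((k:ℂ)+1)/(2*Complex.I)) * ((2*Complex.I/((k:ℂ)+1)) * z) = z := by
      intro z
      rw [← mul_assoc, div_mul_div_comm, mul_comm (((k:ℂ)+1)) (2*Complex.I),
        div_self (mul_ne_zero (mul_ne_zero two_ne_zero Complex.I_ne_zero) hk1), one_mul]
    simp only
    rw [← h']
    exact hcc _
  have hD : IntegrableOn (fun τ : ℝ => ((k:ℂ)+1) * Wf τ ^ k * Wd τ) (Set.Ioi (0:ℝ)) := by
    refine IntegrableOn.congr_fun ?_ hDeq measurableSet_Ioi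
    exact (((i0.sub (i1.const_mul 4)).add i2).add (i3.const_mul 2)).const_mul _
  have hzero := integral_Dk k hD
  have hIeq : (∫ τ in Set.Ioi (0:ℝ), Faux (k+2) (k+2) τ)
      = ∫ τ in Set.Ioi (0:ℝ), (4 * Faux (k+1) (k+1) τ - Faux k k τ - 2 * Faux k (k+2) τ
        + (2 * Complex.I / ((k:ℂ)+1)) * (((k:ℂ)+1) * Wf τ ^ k * Wd τ)) :=
    setIntegral_congr_fun measurableSet_Ioi (fun τ hτ => key k τ hτ)
  have hf1 : Integrable (fun τ : ℝ => 4 * Faux (k+1) (k+1) τ - Faux k k τ - 2 * Faux k (k+2) τ)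
      (volume.restrict (Set.Ioi 0)) := ((i1.const_mul 4).sub i2).sub (i3.const_mul 2)
  have hf2 : Integrable (fun τ : ℝ => (2 * Complex.I / ((k:ℂ)+1)) * (((k:ℂ)+1) * Wf τ ^ k * Wd τ))
      (volume.restrict (Set.Ioi 0)) := hD.const_mul _
  have hf3 : Integrable (fun τ : ℝ => 4 * Faux (k+1) (k+1) τ - Faux k k τ)
      (volume.restrict (Set.Ioi 0)) := (i1.const_mul 4).sub i2
  have hf4 : Integrable (fun τ : ℝ => 2 * Faux k (k+2) τ)
      (volume.restrict (Set.Ioi 0)) := i3.const_mul 2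
  have hf5 : Integrable (fun τ : ℝ => 4 * Faux (k+1) (k+1) τ)
      (volume.restrict (Set.Ioi 0)) := i1.const_mul 4
  have i2' : Integrable (fun τ : ℝ => Faux k k τ) (volume.restrict (Set.Ioi 0)) := i2
  rw [hIeq, integral_add hf1 hf2, integral_sub hf3 hf4, integral_sub hf5 i2',
    integral_const_mul, integral_const_mul, integral_const_mul, hzero]
  ring
end

section
/- Suppose d, d′ : ℕ × ℕ → ℝ both satisfy: (symmetry) d(i,j) = d(j,i) for all i, j; (diagonal values) d(i,i) = −(4/π)·∑_{k=1}^{i} 1/(2k−1) for all i ≥ 0 (so d(0,0) = 0); (first column value) d(0,1) = −1; (recurrence on the axis) d(0,j) = 4·d(0,j−1) − d(0,j−2) − 2·d(1,j−1) for all j ≥ 2; and (interior recurrence) d(i,j) = 4·d(i,j−1) − d(i,j−2) − d(i−1,j−1) − d(i+1,j−1) for all j > i ≥ 1; and the same relations hold for d′. Then d(i,j) = d′(i,j) for all i, j ≥ 0. In other words, these relations uniquely determine all the coefficients c_{i,j} of the square-lattice matrix C without computing any integral. -/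
open Real Finset

/-- The recurrence relations of Proposition 2 uniquely determine the
square-lattice Green's-function coefficients. -/
theorem squareGreen_coefficients_unique (d d' : ℕ → ℕ → ℝ)
    (hsymm : ∀ i j, d i j = d j i)
    (hdiag : ∀ i : ℕ, d i i = -(4 / π) * ∑ k ∈ Finset.Icc 1 i, 1 / (2 * (k : ℝ) - 1))
    (h01 : d 0 1 = -1)
    (haxis : ∀ j : ℕ, 2 ≤ j → d 0 j = 4 * d 0 (j - 1) - d 0 (j - 2) - 2 * d 1 (j - 1))
    (hint : ∀ i j : ℕ, 1 ≤ i → i < j →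
      d i j = 4 * d i (j - 1) - d i (j - 2) - d (i - 1) (j - 1) - d (i + 1) (j - 1))
    (hsymm' : ∀ i j, d' i j = d' j i)
    (hdiag' : ∀ i : ℕ, d' i i = -(4 / π) * ∑ k ∈ Finset.Icc 1 i, 1 / (2 * (k : ℝ) - 1))
    (h01' : d' 0 1 = -1)
    (haxis' : ∀ j : ℕ, 2 ≤ j → d' 0 j = 4 * d' 0 (j - 1) - d' 0 (j - 2) - 2 * d' 1 (j - 1))
    (hint' : ∀ i j : ℕ, 1 ≤ i → i < j →
      d' i j = 4 * d' i (j - 1) - d' i (j - 2) - d' (i - 1) (j - 1) - d' (i + 1) (j - 1)) :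
    ∀ i j : ℕ, d i j = d' i j := by
  have key : ∀ j i, i ≤ j → d i j = d' i j := by
    intro j
    induction j using Nat.strong_induction_on with
    | _ j ih =>
      intro i hij
      rcases eq_or_lt_of_le hij with rfl | hlt
      · rw [hdiag, hdiag']
      · match j, hlt with
        | 1, _ =>
          have hi0 : i = 0 := by omega
          subst hi0; rw [h01, h01']
        | (n+2), hlt =>
          rcases Nat.eq_zero_or_pos i with rfl | hi1
          · have e := haxis (n+2) (by omega)
            have e' := haxis' (n+2) (by omega)
            simp only [show n+2-1 = n+1 from rfl, show n+2-2 = n from rfl] at e e'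
            rw [e, e', ih (n+1) (by omega) 0 (by omega), ih n (by omega) 0 (by omega),
              ih (n+1) (by omega) 1 (by omega)]
          · rcases eq_or_lt_of_le (Nat.lt_succ_iff.mp hlt) with heq | hlt2
            · subst heq
              have e := hint (n+1) (n+2) (by omega) (by omega)
              have e' := hint' (n+1) (n+2) (by omega) (by omega)
              simp only [show n+2-1 = n+1 from rfl, show n+2-2 = n from rfl,
                show n+1-1 = n from rfl] at e e'
              rw [hsymm (n+2) (n+1), hsymm (n+1) n] at e
              rw [hsymm' (n+2) (n+1), hsymm' (n+1) n] at e'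
              have hD : d (n+1) (n+1) = d' (n+1) (n+1) := by rw [hdiag, hdiag']
              have hX : d n (n+1) = d' n (n+1) := ih (n+1) (by omega) n (by omega)
              linarith
            · have e := hint i (n+2) hi1 (by omega)
              have e' := hint' i (n+2) hi1 (by omega)
              simp only [show n+2-1 = n+1 from rfl, show n+2-2 = n from rfl] at e e'
              rw [e, e', ih (n+1) (by omega) i (by omega), ih n (by omega) i (by omega),
                ih (n+1) (by omega) (i-1) (by omega), ih (n+1) (by omega) (i+1) (by omega)]
  intro i j
  rcases le_total i j with h | h
  · exact key j i h
  · rw [hsymm, hsymm']; exact key i j h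
end

section
/- Let w be a self-avoiding polygon of length ℓ ≥ 4 on the square lattice ℤ², and let N(w) denote its distance-one neighborhood. Then any two points u, v ∈ N(w) satisfy ‖u − v‖₁ ≤ ℓ/2 + 2, i.e. two vertices belonging to the distance-one neighborhood of a polygon of length ℓ stand at graph distance at most ℓ/2 + 2 from each other. -/
open Finset

/-- `w` is a self-avoiding polygon of length `ℓ` on the square lattice `ℤ²`:
a closed walk with unit steps whose first `ℓ` vertices are pairwise distinct. -/
def IsSAP (ℓ : ℕ) (w : ℕ → ℤ × ℤ) : Prop :=
  w ℓ = w 0 ∧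
  (∀ k < ℓ, |(w (k + 1)).1 - (w k).1| + |(w (k + 1)).2 - (w k).2| = 1) ∧
  (∀ k < ℓ, ∀ m < ℓ, w k = w m → k = m)

/-- The distance-one neighborhood of the polygon `w`: points of `ℤ²` at `ℓ¹`-distance
at most `1` from a vertex of `w`. -/
def sapNbhd (ℓ : ℕ) (w : ℕ → ℤ × ℤ) : Set (ℤ × ℤ) :=
  {z : ℤ × ℤ | ∃ k < ℓ, |z.1 - (w k).1| + |z.2 - (w k).2| ≤ 1}

private def Dst (p q : ℤ × ℤ) : ℤ := |p.1 - q.1| + |p.2 - q.2|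

private lemma Dst_tri (p q r : ℤ × ℤ) : Dst p r ≤ Dst p q + Dst q r := by
  have h1 : |p.1 - r.1| ≤ |p.1 - q.1| + |q.1 - r.1| := abs_sub_le _ _ _
  have h2 : |p.2 - r.2| ≤ |p.2 - q.2| + |q.2 - r.2| := abs_sub_le _ _ _
  simp only [Dst]; linarith

private lemma Dst_path (ℓ : ℕ) (w : ℕ → ℤ × ℤ)
    (hstep : ∀ k < ℓ, |(w (k + 1)).1 - (w k).1| + |(w (k + 1)).2 - (w k).2| = 1) :
    ∀ n a, a + n ≤ ℓ → Dst (w a) (w (a + n)) ≤ n := by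
  intro n
  induction n with
  | zero => intro a _; simp [Dst]
  | succ n ih =>
    intro a h
    have h1 : a + n < ℓ := by omega
    have := hstep (a + n) h1
    have hs : Dst (w (a + n + 1)) (w (a + n)) ≤ 1 := le_of_eq this
    have htri := Dst_tri (w a) (w (a + n)) (w (a + n + 1))
    have hsym : Dst (w (a + n)) (w (a + n + 1)) = Dst (w (a + n + 1)) (w (a + n)) := by
      simp [Dst, abs_sub_comm]
    have hih := ih a (by omega)
    have : a + (n + 1) = a + n + 1 := by omega
    rw [this]
    push_cast
    omega

theorem sap_neighborhood_diameter (ℓ : ℕ) (hℓ : 4 ≤ ℓ) (w : ℕ → ℤ × ℤ)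
    (hw : IsSAP ℓ w) :
    ∀ u ∈ sapNbhd ℓ w, ∀ v ∈ sapNbhd ℓ w,
      ((|u.1 - v.1| + |u.2 - v.2| : ℤ) : ℝ) ≤ (ℓ : ℝ) / 2 + 2 := by
  obtain ⟨hclosed, hstep, _⟩ := hw
  -- key: any two vertices are at distance ≤ ℓ/2, i.e. 2 * Dst ≤ ℓ
  have key : ∀ k < ℓ, ∀ m < ℓ, 2 * Dst (w k) (w m) ≤ ℓ := by
    have main : ∀ k m, k ≤ m → m < ℓ → 2 * Dst (w k) (w m) ≤ ℓ := by
      intro k m hkm hm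
      have h1 : Dst (w k) (w (k + (m - k))) ≤ (m - k : ℕ) :=
        Dst_path ℓ w hstep (m - k) k (by omega)
      have hkm' : k + (m - k) = m := by omega
      rw [hkm'] at h1
      have h2 : Dst (w m) (w (m + (ℓ - m))) ≤ (ℓ - m : ℕ) :=
        Dst_path ℓ w hstep (ℓ - m) m (by omega)
      have hm' : m + (ℓ - m) = ℓ := by omega
      rw [hm', hclosed] at h2
      have h3 : Dst (w 0) (w (0 + k)) ≤ (k : ℕ) :=
        Dst_path ℓ w hstep k 0 (by omega)
      simp at h3
      have htri := Dst_tri (w m) (w 0) (w k)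
      have hsym : Dst (w k) (w m) = Dst (w m) (w k) := by
        simp [Dst, abs_sub_comm]
      have hsym2 : Dst (w 0) (w k) = Dst (w k) (w 0) := by
        simp [Dst, abs_sub_comm]
      -- Dst (w k) (w m) ≤ (m-k) and ≤ (ℓ-m) + k
      have hb : Dst (w k) (w m) ≤ (ℓ - m : ℕ) + k := by
        rw [hsym]
        calc Dst (w m) (w k) ≤ Dst (w m) (w 0) + Dst (w 0) (w k) := htri
          _ ≤ (ℓ - m : ℕ) + k := by
              have : Dst (w 0) (w k) ≤ (k : ℕ) := by rw [hsym2] at h3 ⊢; exact h3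
              push_cast; push_cast at h2 this; linarith
      push_cast at h1 hb ⊢
      omega
    intro k hk m hm
    rcases le_total k m with h | h
    · exact main k m h hm
    · have := main m k h hk
      have hsym : Dst (w k) (w m) = Dst (w m) (w k) := by
        simp [Dst, abs_sub_comm]
      omega
  intro u hu v hv
  obtain ⟨k, hk, hku⟩ := hu
  obtain ⟨m, hm, hmv⟩ := hv
  have htri1 := Dst_tri u (w k) v
  have htri2 := Dst_tri (w k) (w m) v
  have hkey := key k hk m hm
  have hmv' : Dst (w m) v ≤ 1 := by
    simp only [Dst]
    have e1 : |(w m).1 - v.1| = |v.1 - (w m).1| := abs_sub_comm _ _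
    have e2 : |(w m).2 - v.2| = |v.2 - (w m).2| := abs_sub_comm _ _
    rw [e1, e2]; exact hmv
  have hfinal : 2 * (|u.1 - v.1| + |u.2 - v.2|) ≤ (ℓ : ℤ) + 4 := by
    have : Dst u v = |u.1 - v.1| + |u.2 - v.2| := rfl
    simp only [Dst] at htri1 htri2 hku hmv' hkey ⊢
    omega
  have : ((|u.1 - v.1| + |u.2 - v.2| : ℤ) : ℝ) ≤ ((ℓ : ℤ) + 4 : ℤ) / 2 := by
    rw [le_div_iff₀ (by norm_num)]
    have h2 : (|u.1 - v.1| + |u.2 - v.2|) * 2 ≤ (ℓ : ℤ) + 4 := by linarith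
    exact_mod_cast h2
  calc _ ≤ (((ℓ : ℤ) + 4 : ℤ) : ℝ) / 2 := this
    _ = (ℓ : ℝ) / 2 + 2 := by push_cast; ring
end
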